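/- For every fixed γ > 1, the mathematical entropy η(u) = −ρ·log(p(u)/ρ^γ)/(γ−1), where p(u) = (γ−1)(E − ‖m‖²/(2ρ)), is a convex function on the admissible set A. -/

import Mathlib

/-- States of the 2D compressible flow equations: `u = (ρ, m, E)`. -/
abbrev State : Type := ℝ × EuclideanSpace ℝ (Fin 2) × ℝ

/-- The internal energy `ρe(u) = E - ‖m‖²/(2ρ)`. -/
noncomputable def internalEnergy (u : State) : ℝ :=
  u.2.2 - ‖u.2.1‖ ^ 2 / (2 * u.1)

/-- The admissible set `A = {u | ρ > 0 ∧ ρe(u) > 0}`. -/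
noncomputable def admissibleSet : Set State :=
  {u | 0 < u.1 ∧ 0 < internalEnergy u}

/-- The pressure `p(u) = (γ - 1) ρe(u)`. -/
noncomputable def pressure (γ : ℝ) (u : State) : ℝ :=
  (γ - 1) * internalEnergy u

/-- The mathematical entropy `η(u) = -ρ s(u) / (γ - 1)`, where
`s(u) = log (p(u) / ρ^γ)` is the physical entropy. -/
noncomputable def mathEntropy (γ : ℝ) (u : State) : ℝ :=
  -(u.1 * Real.log (pressure γ u / u.1 ^ γ)) / (γ - 1)

/-- A convex combination of two positive reals is positive. -/
lemma combo_pos (x y a b : ℝ) (hx : 0 < x) (hy : 0 < y)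
    (ha : 0 ≤ a) (hb : 0 ≤ b) (hab : a + b = 1) : 0 < a*x + b*y := by
  rcases eq_or_lt_of_le ha with h|h
  · have hb1 : b = 1 := by linarith
    simp [← h, hb1, hy]
  · nlinarith [mul_pos h hx, mul_nonneg hb hy.le]

/-- Joint convexity of the quadratic-over-linear function. -/
lemma quad_div_le (x y r1 r2 a b : ℝ) (hr1 : 0 < r1) (hr2 : 0 < r2)
    (ha : 0 ≤ a) (hb : 0 ≤ b) (hab : a + b = 1) :
    (a*x + b*y)^2 / (a*r1 + b*r2) ≤ a*(x^2/r1) + b*(y^2/r2) := by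
  have hr : 0 < a*r1 + b*r2 := combo_pos r1 r2 a b hr1 hr2 ha hb hab
  rw [div_le_iff₀ hr]
  have expand : (a*(x^2/r1)+b*(y^2/r2))*(a*r1+b*r2) - (a*x+b*y)^2
      = a*b*(x*r2-y*r1)^2/(r1*r2) := by
    field_simp
    ring
  have h' : 0 ≤ a*b*(x*r2-y*r1)^2/(r1*r2) := by positivity
  linarith

/-- Concavity of the internal energy on states with positive density. -/
lemma ie_concave (u v : State) (a b : ℝ) (hu : 0 < u.1) (hv : 0 < v.1)
    (ha : 0 ≤ a) (hb : 0 ≤ b) (hab : a + b = 1) :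
    a * internalEnergy u + b * internalEnergy v ≤ internalEnergy (a • u + b • v) := by
  have hw1 : (a • u + b • v).1 = a * u.1 + b * v.1 := by simp [smul_eq_mul]
  have hwm : (a • u + b • v).2.1 = a • u.2.1 + b • v.2.1 := by simp
  have hwE : (a • u + b • v).2.2 = a * u.2.2 + b * v.2.2 := by simp [smul_eq_mul]
  unfold internalEnergy
  rw [hw1, hwm, hwE]
  have hnorm : ‖a • u.2.1 + b • v.2.1‖ ≤ a * ‖u.2.1‖ + b * ‖v.2.1‖ := by
    calc ‖a • u.2.1 + b • v.2.1‖ ≤ ‖a • u.2.1‖ + ‖b • v.2.1‖ := norm_add_le _ _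
      _ = a * ‖u.2.1‖ + b * ‖v.2.1‖ := by
          rw [norm_smul, norm_smul, Real.norm_eq_abs, Real.norm_eq_abs,
            abs_of_nonneg ha, abs_of_nonneg hb]
  have hsq : ‖a • u.2.1 + b • v.2.1‖^2 ≤ (a * ‖u.2.1‖ + b * ‖v.2.1‖)^2 := by
    apply sq_le_sq' _ hnorm
    linarith [norm_nonneg (a • u.2.1 + b • v.2.1),
      add_nonneg (mul_nonneg ha (norm_nonneg u.2.1)) (mul_nonneg hb (norm_nonneg v.2.1))]
  have hρ : 0 < a * u.1 + b * v.1 := combo_pos u.1 v.1 a b hu hv ha hb hab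
  have h2 : ‖a • u.2.1 + b • v.2.1‖^2 / (2*(a * u.1 + b * v.1))
      ≤ a * (‖u.2.1‖^2/(2*u.1)) + b * (‖v.2.1‖^2/(2*v.1)) := by
    calc ‖a • u.2.1 + b • v.2.1‖^2 / (2*(a * u.1 + b * v.1))
        ≤ (a * ‖u.2.1‖ + b * ‖v.2.1‖)^2 / (2*(a * u.1 + b * v.1)) := by
          gcongr
      _ ≤ a * (‖u.2.1‖^2/(2*u.1)) + b * (‖v.2.1‖^2/(2*v.1)) := by
          have := quad_div_le ‖u.2.1‖ ‖v.2.1‖ (2*u.1) (2*v.1) a b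
            (by linarith) (by linarith) ha hb hab
          calc (a * ‖u.2.1‖ + b * ‖v.2.1‖)^2 / (2*(a * u.1 + b * v.1))
              = (a * ‖u.2.1‖ + b * ‖v.2.1‖)^2 / (a*(2*u.1) + b*(2*v.1)) := by ring_nf
            _ ≤ _ := this
  linarith

/-- Joint convexity of `-ρ log(e/ρ)` (perspective of `-log`). -/
lemma persp_log (r1 r2 e1 e2 a b : ℝ) (hr1 : 0 < r1) (hr2 : 0 < r2)
    (he1 : 0 < e1) (he2 : 0 < e2) (ha : 0 ≤ a) (hb : 0 ≤ b)
    (hr : 0 < a*r1 + b*r2) :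
    -((a*r1+b*r2) * Real.log ((a*e1+b*e2)/(a*r1+b*r2)))
      ≤ a*(-(r1*Real.log (e1/r1))) + b*(-(r2*Real.log (e2/r2))) := by
  set ρ := a*r1 + b*r2 with hρ
  have hw1 : 0 ≤ a*r1/ρ := by positivity
  have hw2 : 0 ≤ b*r2/ρ := by positivity
  have hsum : a*r1/ρ + b*r2/ρ = 1 := by field_simp; exact hρ.symm
  have hkey := strictConcaveOn_log_Ioi.concaveOn.2
    (Set.mem_Ioi.2 (div_pos he1 hr1)) (Set.mem_Ioi.2 (div_pos he2 hr2)) hw1 hw2 hsum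
  have hpt : (a*r1/ρ) • (e1/r1) + (b*r2/ρ) • (e2/r2) = (a*e1+b*e2)/ρ := by
    simp only [smul_eq_mul]
    field_simp
  rw [hpt] at hkey
  simp only [smul_eq_mul] at hkey
  have := mul_le_mul_of_nonneg_left hkey hr.le
  have e1' : ρ * (a*r1/ρ * Real.log (e1/r1)) = a*(r1*Real.log (e1/r1)) := by
    field_simp
  have e2' : ρ * (b*r2/ρ * Real.log (e2/r2)) = b*(r2*Real.log (e2/r2)) := by
    field_simp
  nlinarith [this]

/-- The scalar form of the entropy convexity inequality. -/
lemma entropy_scalar (γ r1 r2 e1 e2 a b e : ℝ) (hγ : 1 < γ)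
    (hr1 : 0 < r1) (hr2 : 0 < r2) (he1 : 0 < e1) (he2 : 0 < e2)
    (ha : 0 ≤ a) (hb : 0 ≤ b) (hab : a + b = 1) (he : a*e1 + b*e2 ≤ e) :
    -((a*r1+b*r2) * Real.log ((γ-1)*e/(a*r1+b*r2)^γ))/(γ-1)
      ≤ a * (-(r1*Real.log ((γ-1)*e1/r1^γ))/(γ-1))
        + b * (-(r2*Real.log ((γ-1)*e2/r2^γ))/(γ-1)) := by
  have hg : (0:ℝ) < γ - 1 := by linarith
  have hr : 0 < a*r1 + b*r2 := combo_pos r1 r2 a b hr1 hr2 ha hb hab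
  have hE : 0 < a*e1 + b*e2 := combo_pos e1 e2 a b he1 he2 ha hb hab
  have he' : 0 < e := lt_of_lt_of_le hE he
  set ρ := a*r1 + b*r2 with hρdef
  have decomp : ∀ R E : ℝ, 0 < R → 0 < E →
      -(R*Real.log ((γ-1)*E/R^γ))
        = -(R*Real.log (γ-1)) - R*Real.log (E/R) + (γ-1)*(R*Real.log R) := by
    intro R E hR hEp
    rw [Real.log_div (by positivity) (ne_of_gt (Real.rpow_pos_of_pos hR γ)),
      Real.log_mul (by positivity) (ne_of_gt hEp), Real.log_rpow hR,
      Real.log_div (ne_of_gt hEp) (ne_of_gt hR)]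
    ring
  have step1 : -(ρ*Real.log ((γ-1)*e/ρ^γ)) ≤ -(ρ*Real.log ((γ-1)*(a*e1+b*e2)/ρ^γ)) := by
    have hrp := Real.rpow_pos_of_pos hr γ
    have hlog : Real.log ((γ-1)*(a*e1+b*e2)/ρ^γ) ≤ Real.log ((γ-1)*e/ρ^γ) := by
      apply Real.log_le_log (by positivity)
      gcongr
    nlinarith [mul_le_mul_of_nonneg_left hlog hr.le]
  have hmul := Real.convexOn_mul_log.2 (Set.mem_Ici.2 hr1.le) (Set.mem_Ici.2 hr2.le) ha hb hab
  simp only [smul_eq_mul] at hmul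
  have hmul' := mul_le_mul_of_nonneg_left hmul hg.le
  have hpersp := persp_log r1 r2 e1 e2 a b hr1 hr2 he1 he2 ha hb hr
  have hfin : -(ρ*Real.log ((γ-1)*e/ρ^γ))
      ≤ a * -(r1*Real.log ((γ-1)*e1/r1^γ)) + b * -(r2*Real.log ((γ-1)*e2/r2^γ)) := by
    calc -(ρ*Real.log ((γ-1)*e/ρ^γ))
        ≤ -(ρ*Real.log ((γ-1)*(a*e1+b*e2)/ρ^γ)) := step1
      _ ≤ _ := by
          rw [decomp ρ (a*e1+b*e2) hr hE, decomp r1 e1 hr1 he1, decomp r2 e2 hr2 he2]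
          have hρ' : ρ = a*r1+b*r2 := hρdef
          rw [hρ']
          linarith [hpersp, hmul']
  have heq : a * (-(r1*Real.log ((γ-1)*e1/r1^γ))/(γ-1)) + b * (-(r2*Real.log ((γ-1)*e2/r2^γ))/(γ-1))
      = (a * -(r1*Real.log ((γ-1)*e1/r1^γ)) + b * -(r2*Real.log ((γ-1)*e2/r2^γ)))/(γ-1) := by
    ring
  rw [heq]
  gcongr

/-- For every fixed `γ > 1`, the mathematical entropy is a convex function on
the admissible set. -/
theorem mathEntropy_convexOn (γ : ℝ) (hγ : 1 < γ) :
    ConvexOn ℝ admissibleSet (mathEntropy γ) := by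
  constructor
  · intro u hu v hv a b ha hb hab
    obtain ⟨hu1, hu2⟩ := hu
    obtain ⟨hv1, hv2⟩ := hv
    have hw1 : (a • u + b • v).1 = a * u.1 + b * v.1 := by simp [smul_eq_mul]
    refine ⟨?_, ?_⟩
    · show 0 < (a • u + b • v).1
      rw [hw1]
      exact combo_pos u.1 v.1 a b hu1 hv1 ha hb hab
    · show 0 < internalEnergy (a • u + b • v)
      have := ie_concave u v a b hu1 hv1 ha hb hab
      have hE := combo_pos (internalEnergy u) (internalEnergy v) a b hu2 hv2 ha hb hab
      linarith
  · intro u hu v hv a b ha hb hab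
    obtain ⟨hu1, hu2⟩ := hu
    obtain ⟨hv1, hv2⟩ := hv
    have hw1 : (a • u + b • v).1 = a * u.1 + b * v.1 := by simp [smul_eq_mul]
    have hle := ie_concave u v a b hu1 hv1 ha hb hab
    have hmain := entropy_scalar γ u.1 v.1 (internalEnergy u) (internalEnergy v) a b
      (internalEnergy (a • u + b • v)) hγ hu1 hv1 hu2 hv2 ha hb hab hle
    simp only [smul_eq_mul]
    unfold mathEntropy pressure
    rw [hw1]
    exact hmain
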